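/- Let R be an integral domain with quotient field K, let X be an indeterminate over R, and let * be a semistar operation on the polynomial ring R[X] (whose quotient field is K(X)). Then the map \bar{*} sending each nonzero R-submodule E of K to E^{\bar{*}} = (E[X])^* ∩ K, where E[X] denotes the R[X]-submodule of K(X) generated by E, is a semistar operation on R. -/

import Mathlib

open Polynomial Pointwise

/-- A *semistar operation* on a domain `S` with quotient field `M`: a map on the
(nonzero) `S`-submodules of `M` satisfying `(aE)^* = aE^*`, `E ⊆ E^*`,
monotonicity and idempotency. -/
structure IsSemistarOperation (S M : Type*) [CommRing S] [Field M] [Algebra S M]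
    (star : Submodule S M → Submodule S M) : Prop where
  smul_eq : ∀ a : M, a ≠ 0 → ∀ E : Submodule S M, E ≠ ⊥ → star (a • E) = a • star E
  le_star : ∀ E : Submodule S M, E ≠ ⊥ → E ≤ star E
  mono : ∀ E F : Submodule S M, E ≠ ⊥ → F ≠ ⊥ → E ≤ F → star E ≤ star F
  idem : ∀ E : Submodule S M, E ≠ ⊥ → star (star E) = star E

variable {R K L : Type*} [CommRing R] [IsDomain R]
  [Field K] [Algebra R K] [IsFractionRing R K]
  [Field L] [Algebra R[X] L] [IsFractionRing R[X] L]

/-- `E[X]`: the `R[X]`-submodule of `L = K(X)` generated by `E ⊆ K`,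
where `ι : K →+* L` is the canonical embedding. -/
noncomputable def polyExt (ι : K →+* L) (E : Submodule R K) : Submodule R[X] L :=
  Submodule.span R[X] (ι '' (E : Set K))

/-- The operation `E ↦ E^{\bar{*}} = (E[X])^* ∩ K` on `R`-submodules of `K` induced by a
semistar operation `*` on `R[X]`. -/
def barStar (star : Submodule R[X] L → Submodule R[X] L) (ι : K →+* L)
    (hι : ∀ r : R, ι (algebraMap R K r) = algebraMap R[X] L (C r))
    (E : Submodule R K) : Submodule R K where
  carrier := ι ⁻¹' (star (polyExt ι E) : Set L)
  add_mem' := fun {a b} ha hb => by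
    simp only [Set.mem_preimage, SetLike.mem_coe, map_add] at *
    exact (star (polyExt ι _)).add_mem ha hb
  zero_mem' := by
    simp only [Set.mem_preimage, SetLike.mem_coe, map_zero]
    exact (star (polyExt ι _)).zero_mem
  smul_mem' := fun r x hx => by
    simp only [Set.mem_preimage, SetLike.mem_coe] at *
    have h : ι (r • x) = (C r : R[X]) • ι x := by
      rw [Algebra.smul_def, map_mul, hι, Algebra.smul_def]
    rw [h]
    exact (star (polyExt ι _)).smul_mem _ hx

section Aux
variable (star : Submodule R[X] L → Submodule R[X] L) (ι : K →+* L)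

lemma polyExt_ne_bot {E : Submodule R K} (hE : E ≠ ⊥) : polyExt (L := L) ι E ≠ ⊥ := by
  obtain ⟨x, hxE, hx⟩ := Submodule.exists_mem_ne_zero_of_ne_bot hE
  rw [Submodule.ne_bot_iff]
  exact ⟨ι x, Submodule.subset_span ⟨x, hxE, rfl⟩, fun h => hx (ι.injective (by simp [h]))⟩

lemma polyExt_mono {E F : Submodule R K} (h : E ≤ F) : polyExt (L := L) ι E ≤ polyExt ι F :=
  Submodule.span_mono (Set.image_mono h)

lemma polyExt_smul (a : K) (E : Submodule R K) :
    polyExt (L := L) ι (a • E) = ι a • polyExt ι E := by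
  unfold polyExt
  rw [Submodule.coe_pointwise_smul, Set.image_smul_distrib, Submodule.span_smul]

lemma mem_barStar {hι : ∀ r : R, ι (algebraMap R K r) = algebraMap R[X] L (C r)}
    {E : Submodule R K} {x : K} :
    x ∈ barStar star ι hι E ↔ ι x ∈ star (polyExt ι E) := Iff.rfl

end Aux

theorem barStar_isSemistarOperation
    (star : Submodule R[X] L → Submodule R[X] L)
    (hstar : IsSemistarOperation R[X] L star)
    (ι : K →+* L)
    (hι : ∀ r : R, ι (algebraMap R K r) = algebraMap R[X] L (C r)) :
    IsSemistarOperation R K (barStar star ι hι) := by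
  have hne : ∀ E : Submodule R K, E ≠ ⊥ → barStar star ι hι E ≠ ⊥ := by
    intro E hE
    obtain ⟨x, hxE, hx⟩ := Submodule.exists_mem_ne_zero_of_ne_bot hE
    rw [Submodule.ne_bot_iff]
    refine ⟨x, ?_, hx⟩
    exact hstar.le_star _ (polyExt_ne_bot ι hE) (Submodule.subset_span ⟨x, hxE, rfl⟩)
  have hle : ∀ E : Submodule R K, E ≠ ⊥ → E ≤ barStar star ι hι E := by
    intro E hE x hx
    exact hstar.le_star _ (polyExt_ne_bot ι hE) (Submodule.subset_span ⟨x, hx, rfl⟩)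
  have hmono : ∀ E F : Submodule R K, E ≠ ⊥ → F ≠ ⊥ → E ≤ F →
      barStar star ι hι E ≤ barStar star ι hι F := by
    intro E F hE hF h x hx
    exact hstar.mono _ _ (polyExt_ne_bot ι hE) (polyExt_ne_bot ι hF) (polyExt_mono ι h) hx
  refine ⟨?_, hle, hmono, ?_⟩
  · intro a ha E hE
    have hιa : ι a ≠ 0 := fun h => ha (ι.injective (by simp [h]))
    ext x
    rw [mem_barStar, polyExt_smul, hstar.smul_eq _ hιa _ (polyExt_ne_bot ι hE)]
    constructor
    · rintro ⟨y, hy, hxy⟩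
      refine ⟨a⁻¹ * x, ?_, by simp only [DistribSMul.toLinearMap_apply, smul_eq_mul]; field_simp⟩
      have hy' : ι (a⁻¹ * x) = y := by
        have : ι x = ι a * y := by rw [← hxy]; rfl
        rw [map_mul, map_inv₀, this]
        field_simp
      exact show ι (a⁻¹ * x) ∈ star (polyExt ι E) from hy' ▸ hy
    · rintro ⟨y, hy, hxy⟩
      exact ⟨ι y, hy, by simp only [DistribSMul.toLinearMap_apply, smul_eq_mul] at *; rw [← hxy, map_mul]⟩
  · intro E hE
    have h1 : polyExt (L := L) ι (barStar star ι hι E) ≤ star (polyExt ι E) := by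
      rw [polyExt, Submodule.span_le]
      rintro _ ⟨y, hy, rfl⟩
      exact hy
    have h2 : polyExt (L := L) ι E ≤ polyExt ι (barStar star ι hι E) :=
      polyExt_mono ι (hle E hE)
    have hsne : star (polyExt (L := L) ι E) ≠ ⊥ := fun h => polyExt_ne_bot ι hE
      (le_bot_iff.mp (h ▸ hstar.le_star _ (polyExt_ne_bot ι hE)))
    have heq : star (polyExt (L := L) ι (barStar star ι hι E)) = star (polyExt ι E) := by
      apply le_antisymm
      · calc star (polyExt (L := L) ι (barStar star ι hι E))
            ≤ star (star (polyExt ι E)) :=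
              hstar.mono _ _ (polyExt_ne_bot ι (hne E hE)) hsne h1
          _ = star (polyExt ι E) := hstar.idem _ (polyExt_ne_bot ι hE)
      · exact hstar.mono _ _ (polyExt_ne_bot ι hE) (polyExt_ne_bot ι (hne E hE)) h2
    ext x
    rw [mem_barStar, heq, mem_barStar]
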